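/- arXiv:1806.07738 — 2 statements merged into one kernel-verified Lean document; each statement's English description precedes it below -/
import Mathlib

section
/- Let 0 < a < b, N ∈ ℕ, α = (α₁,…,α_N) ∈ (0,∞)^N, and l = (l₁,…,l_N) ∈ ℝ^N with l₁ < ⋯ < l_N, and suppose GPFP(a,b,N,α,l) is a probability measure. Then the pushforward of GPFP(a,b,N,α,l) under the map x ↦ 1/x equals the measure GPFP(1/b, 1/a, N, (α_N√(ab), α_{N−1}√(ab), …, α₁√(ab)), (1−l_N, 1−l_{N−1}, …, 1−l₁)); in particular the latter is also a probability measure of GPFP type. -/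
open MeasureTheory Set

/-- Density of the generalized power distribution with free Poisson term:
`f(x) = (√((b-x)(x-a))/x) · Σ_k α_k x^{-l_k}`. -/
noncomputable def gpfpDensity (a b : ℝ) (N : ℕ) (α l : Fin N → ℝ) (x : ℝ) : ℝ :=
  Real.sqrt ((b - x) * (x - a)) / x * ∑ k : Fin N, α k * x ^ (-(l k))

/-- The GPFP measure: the measure on `(a,b)` with density `gpfpDensity`. -/
noncomputable def GPFP (a b : ℝ) (N : ℕ) (α l : Fin N → ℝ) : Measure ℝ :=
  MeasureTheory.volume.withDensity
    (fun x => ENNReal.ofReal ((Set.Ioo a b).indicator (gpfpDensity a b N α l) x))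

lemma lint_cov {s : Set ℝ} {f f' : ℝ → ℝ} (hs : MeasurableSet s)
    (hf' : ∀ x ∈ s, HasDerivWithinAt f (f' x) s x) (hf : InjOn f s) (g : ℝ → ENNReal) :
    ∫⁻ x in f '' s, g x = ∫⁻ x in s, ENNReal.ofReal |f' x| * g (f x) := by
  simpa only [ContinuousLinearMap.det_toSpanSingleton] using
    lintegral_image_eq_lintegral_abs_det_fderiv_mul volume hs
      (fun x hx => (hf' x hx).hasFDerivWithinAt) hf g

lemma gpfp_key (a b : ℝ) (ha : 0 < a) (hab : a < b) (N : ℕ) (α l : Fin N → ℝ)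
    {y : ℝ} (hy : y ∈ Ioo b⁻¹ a⁻¹) :
    ((y ^ 2)⁻¹) * gpfpDensity a b N α l y⁻¹
      = gpfpDensity b⁻¹ a⁻¹ N (fun k => α k.rev * Real.sqrt (a * b))
          (fun k => 1 - l k.rev) y := by
  have hb : 0 < b := ha.trans hab
  have hy0 : 0 < y := (inv_pos.2 hb).trans hy.1
  have hy1 : y < a⁻¹ := hy.2
  have h1 : 0 < a⁻¹ - y := by linarith
  have h2 : 0 < y - b⁻¹ := by linarith [hy.1]
  have hyne : y ≠ 0 := ne_of_gt hy0
  have hsqrt : Real.sqrt ((b - y⁻¹) * (y⁻¹ - a))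
      = Real.sqrt (a * b) * Real.sqrt ((a⁻¹ - y) * (y - b⁻¹)) * y⁻¹ := by
    have hprod : (b - y⁻¹) * (y⁻¹ - a) = (a * b) * ((a⁻¹ - y) * (y - b⁻¹)) * (y⁻¹) ^ 2 := by
      field_simp
    rw [hprod, Real.sqrt_mul (by positivity), Real.sqrt_mul (by positivity),
      Real.sqrt_sq (by positivity)]
  have hsum1 : ∑ k : Fin N, α k * (y⁻¹) ^ (-(l k)) = ∑ k : Fin N, α k * y ^ (l k) := by
    refine Finset.sum_congr rfl fun k _ => ?_
    rw [Real.inv_rpow hy0.le, ← Real.rpow_neg hy0.le, neg_neg]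
  have hsum2 : ∑ k : Fin N, α k.rev * Real.sqrt (a * b) * y ^ (-(1 - l k.rev))
      = ∑ k : Fin N, α k * Real.sqrt (a * b) * (y ^ (l k) / y) := by
    refine Fintype.sum_equiv Fin.revPerm _ _ fun k => ?_
    have : -(1 - l k.rev) = l k.rev - 1 := by ring
    rw [this, Real.rpow_sub hy0, Real.rpow_one]
    simp [Fin.revPerm]
  simp only [gpfpDensity]
  rw [hsqrt, hsum1, hsum2]
  rw [mul_div_assoc, Finset.mul_sum, Finset.mul_sum, Finset.mul_sum]
  refine Finset.sum_congr rfl fun k _ => ?_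
  field_simp

/-- If `X ~ GPFP(a, b, N, (α₁,…,α_N), (l₁,…,l_N))`, then
`X⁻¹ ~ GPFP(1/b, 1/a, N, (α_N√(ab),…,α₁√(ab)), (1-l_N,…,1-l₁))`;
in particular the latter is also a probability measure. -/
theorem gpfp_inv (a b : ℝ) (ha : 0 < a) (hab : a < b)
    (N : ℕ) (hN : 0 < N) (α l : Fin N → ℝ)
    (hα : ∀ k, 0 < α k) (hl : StrictMono l)
    (hprob : IsProbabilityMeasure (GPFP a b N α l)) :
    Measure.map (fun x : ℝ => x⁻¹) (GPFP a b N α l) =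
      GPFP b⁻¹ a⁻¹ N (fun k => α k.rev * Real.sqrt (a * b)) (fun k => 1 - l k.rev) ∧
    IsProbabilityMeasure
      (GPFP b⁻¹ a⁻¹ N (fun k => α k.rev * Real.sqrt (a * b)) (fun k => 1 - l k.rev)) := by
  have hb : 0 < b := ha.trans hab
  have hmap : Measure.map (fun x : ℝ => x⁻¹) (GPFP a b N α l) =
      GPFP b⁻¹ a⁻¹ N (fun k => α k.rev * Real.sqrt (a * b)) (fun k => 1 - l k.rev) := by
    ext s hs
    rw [Measure.map_apply measurable_inv hs]
    unfold GPFP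
    rw [withDensity_apply _ (hs.preimage measurable_inv), withDensity_apply _ hs]
    have hind : ∀ (u v : ℝ) (g : ℝ → ℝ),
        (fun x => ENNReal.ofReal ((Ioo u v).indicator g x))
          = (Ioo u v).indicator (fun x => ENNReal.ofReal (g x)) := by
      intro u v g; funext x; by_cases hx : x ∈ Ioo u v <;> simp [hx]
    rw [hind, hind, setLIntegral_indicator measurableSet_Ioo,
      setLIntegral_indicator measurableSet_Ioo]
    have hmem : ∀ y ∈ Ioo b⁻¹ a⁻¹ ∩ s, y⁻¹ ∈ Ioo a b := by
      rintro y ⟨⟨hy1, hy2⟩, -⟩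
      have hy0 : 0 < y := (inv_pos.2 hb).trans hy1
      constructor
      · have := inv_strictAnti₀ hy0 hy2
        rwa [inv_inv] at this
      · have := inv_strictAnti₀ (inv_pos.2 hb) hy1
        rwa [inv_inv] at this
    have himg : (fun x : ℝ => x⁻¹) '' (Ioo b⁻¹ a⁻¹ ∩ s)
        = Ioo a b ∩ (fun x : ℝ => x⁻¹) ⁻¹' s := by
      ext x
      constructor
      · rintro ⟨y, hy, rfl⟩
        refine ⟨hmem y hy, ?_⟩
        simpa [inv_inv] using hy.2
      · rintro ⟨⟨hx1, hx2⟩, hxs⟩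
        have hx0 : 0 < x := ha.trans hx1
        refine ⟨x⁻¹, ⟨⟨?_, ?_⟩, hxs⟩, inv_inv x⟩
        · exact inv_strictAnti₀ hx0 hx2
        · exact inv_strictAnti₀ ha hx1
    rw [← himg,
      lint_cov (f' := fun y => -(y ^ 2)⁻¹) (measurableSet_Ioo.inter hs)
        (fun y hy => by
          have hy0 : (0:ℝ) < y := (inv_pos.2 hb).trans hy.1.1
          exact (hasDerivAt_inv hy0.ne').hasDerivWithinAt)
        (fun x _ y _ h => by rw [← inv_inv x, h, inv_inv])]
    refine setLIntegral_congr_fun (measurableSet_Ioo.inter hs)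
      (fun y hy => ?_)
    have hy0 : (0:ℝ) < y := (inv_pos.2 hb).trans hy.1.1
    rw [← ENNReal.ofReal_mul (abs_nonneg _), abs_neg, abs_inv, abs_of_nonneg (by positivity),
      gpfp_key a b ha hab N α l hy.1]
  refine ⟨hmap, ?_⟩
  rw [← hmap]
  exact Measure.isProbabilityMeasure_map measurable_inv.aemeasurable
end

section
/- The pushforward under the map x ↦ 1/x of the probability measure on (1/4, ∞) with density √(4x−1)/(2πx²) (the free positive stable law with index 1/2) equals the free Poisson distribution fp(1), i.e., the probability measure on (0,4) with density √((4−x)x)/(2πx). -/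
open MeasureTheory Set

/-- The free positive stable law with index 1/2: the probability measure on `(1/4, ∞)`
with density `√(4x-1)/(2πx²)`. -/
noncomputable def freeStableHalf : Measure ℝ :=
  MeasureTheory.volume.withDensity
    (fun x => ENNReal.ofReal
      ((Set.Ioi (1 / 4 : ℝ)).indicator
        (fun x => Real.sqrt (4 * x - 1) / (2 * Real.pi * x ^ 2)) x))

/-- The free Poisson distribution `fp(1)`: the probability measure on `(0,4)` with
density `√((4-x)x)/(2πx)`. -/
noncomputable def fpOne : Measure ℝ :=
  MeasureTheory.volume.withDensity
    (fun x => ENNReal.ofReal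
      ((Set.Ioo (0 : ℝ) 4).indicator
        (fun x => Real.sqrt ((4 - x) * x) / (2 * Real.pi * x)) x))

lemma inv_preimage_Ioo : (fun x : ℝ => x⁻¹) ⁻¹' Set.Ioi (1 / 4 : ℝ) = Set.Ioo (0 : ℝ) 4 := by
  ext x
  simp only [mem_preimage, mem_Ioi, mem_Ioo]
  constructor
  · intro h
    have hx : 0 < x⁻¹ := lt_trans (by norm_num) h
    have hx0 : 0 < x := inv_pos.mp hx
    refine ⟨hx0, ?_⟩
    have h' : 1 / 4 < 1 / x := by simpa [one_div] using h
    have := (div_lt_div_iff₀ (by norm_num) hx0).mp h'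
    linarith
  · rintro ⟨h0, h4⟩
    rw [lt_inv_comm₀ (by norm_num) h0]
    rw [inv_eq_one_div]
    linarith

/-- The pushforward of the free positive stable law with index 1/2 under `x ↦ 1/x`
is the free Poisson distribution `fp(1)`. -/
theorem freeStableHalf_inv_eq_fpOne :
    Measure.map (fun x : ℝ => x⁻¹) freeStableHalf = fpOne := by
  ext s hs
  rw [Measure.map_apply measurable_inv hs]
  unfold freeStableHalf fpOne
  rw [withDensity_apply _ (hs.preimage measurable_inv), withDensity_apply _ hs]
  have hind : ∀ (S : Set ℝ) (g : ℝ → ℝ) (x : ℝ),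
      ENNReal.ofReal (S.indicator g x) = S.indicator (fun y => ENNReal.ofReal (g y)) x := by
    intro S g x
    by_cases h : x ∈ S <;> simp [h]
  simp_rw [hind]
  rw [lintegral_indicator measurableSet_Ioi, lintegral_indicator measurableSet_Ioo,
    Measure.restrict_restrict measurableSet_Ioi, Measure.restrict_restrict measurableSet_Ioo]
  have hset : Set.Ioi (1 / 4 : ℝ) ∩ (fun x : ℝ => x⁻¹) ⁻¹' s
      = (fun x : ℝ => x⁻¹) '' (Set.Ioo (0 : ℝ) 4 ∩ s) := by
    have himg : (fun x : ℝ => x⁻¹) '' (Set.Ioo (0 : ℝ) 4 ∩ s)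
        = (fun x : ℝ => x⁻¹) ⁻¹' (Set.Ioo (0 : ℝ) 4 ∩ s) :=
      congrFun (Set.image_eq_preimage_of_inverse (fun x : ℝ => inv_inv x) (fun x : ℝ => inv_inv x)) _
    rw [himg, Set.preimage_inter]
    have h2 : (fun x : ℝ => x⁻¹) ⁻¹' Set.Ioo (0 : ℝ) 4 = Set.Ioi (1 / 4 : ℝ) := by
      rw [← inv_preimage_Ioo, ← Set.preimage_comp]
      simp [Function.comp_def]
    rw [h2]
  rw [hset]
  rw [lintegral_image_eq_lintegral_abs_det_fderiv_mul volume
    (measurableSet_Ioo.inter hs)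
    (f' := fun x => ContinuousLinearMap.smulRight (1 : ℝ →L[ℝ] ℝ) (-(x ^ 2)⁻¹))
    (fun x hx => ((hasDerivAt_inv (ne_of_gt hx.1.1)).hasDerivWithinAt).hasFDerivWithinAt)
    (inv_involutive.injective.injOn)]
  refine setLIntegral_congr_fun (measurableSet_Ioo.inter hs) ?_
  intro x hx
  obtain ⟨⟨hx0, hx4⟩, _⟩ := hx
  beta_reduce
  rw [ContinuousLinearMap.det_smulRight, ContinuousLinearMap.one_apply, one_mul]
  have hxne : x ≠ 0 := ne_of_gt hx0
  have hπ : (0:ℝ) < Real.pi := Real.pi_pos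
  have habs : |(-(x ^ 2)⁻¹)| = (x ^ 2)⁻¹ := by
    rw [abs_neg, abs_inv, abs_of_nonneg (sq_nonneg x)]
  rw [habs, ← ENNReal.ofReal_mul (by positivity)]
  congr 1
  have hsqrt : Real.sqrt ((4 - x) * x) = x * Real.sqrt (4 * x⁻¹ - 1) := by
    have key : (4 - x) * x = x ^ 2 * (4 * x⁻¹ - 1) := by
      field_simp
    rw [key, Real.sqrt_mul (sq_nonneg x), Real.sqrt_sq (le_of_lt hx0)]
  rw [hsqrt]
  have hx2 : (x⁻¹) ^ 2 = (x ^ 2)⁻¹ := by rw [inv_pow]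
  rw [hx2]
  field_simp
end
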